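/- Let N ≥ 1. Define r ∈ Matrix (Fin N × Fin N) (Fin N × Fin N) ℂ by r_{(p,q),(r,s)} := [p=q=r=s] + 2·[p=s ∧ q=r ∧ p>q] (Iverson brackets), and let r^{T₁} be its partial transpose in the first factor: (r^{T₁})_{(p,q),(r,s)} := r_{(r,q),(p,s)}. For A ∈ Matrix (Fin N) (Fin N) ℂ set A₁ := A ⊗ 𝟙_N and A₂ := 𝟙_N ⊗ A (Kronecker products, as matrices indexed by Fin N × Fin N). Then the Poisson bracket admits the r-matrix form: for all A and all indices i, j, k, l, π_{(i,j),(k,l)}(A) = −( A₂·A₁·r − r·A₁·A₂ + A₂·r^{T₁}·A₁ − A₁·r^{T₁}·A₂ )_{(i,k),(j,l)}. -/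
import Mathlib

open Matrix Kronecker

noncomputable section

/-- The sign of the difference of two indices, as a complex number
(`sgn : ℤ → ℤ` with `sgn 0 = 0`). -/
def fsgn {N : ℕ} (a b : Fin N) : ℂ := ((((a : ℕ) : ℤ) - ((b : ℕ) : ℤ)).sign : ℤ)

/-- The quadratic Poisson bivector components. -/
def pb {N : ℕ} (A : Matrix (Fin N) (Fin N) ℂ) (i j k l : Fin N) : ℂ :=
  (fsgn j l + fsgn i k) * A i l * A k j
    + (fsgn j k + 1) * A j l * A i k
    + (fsgn i l - 1) * A l j * A k i

/-- The classical `r`-matrix `r = Σ_i E_{ii}⊗E_{ii} + 2Σ_{i>j} E_{ij}⊗E_{ji}`: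
`r_{(p,q),(r,s)} = [p=q=r=s] + 2·[p=s ∧ q=r ∧ p>q]`. -/
def rmat (N : ℕ) : Matrix (Fin N × Fin N) (Fin N × Fin N) ℂ :=
  fun pq rs =>
    (if pq.1 = pq.2 ∧ pq.1 = rs.1 ∧ pq.1 = rs.2 then 1 else 0)
      + 2 * (if pq.1 = rs.2 ∧ pq.2 = rs.1 ∧ pq.2 < pq.1 then 1 else 0)

/-- The partial transpose of `r` in the first tensor factor:
`(r^{T₁})_{(p,q),(r,s)} = r_{(r,q),(p,s)}`. -/
def rmatT1 (N : ℕ) : Matrix (Fin N × Fin N) (Fin N × Fin N) ℂ :=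
  fun pq rs => rmat N (rs.1, pq.2) (pq.1, rs.2)

lemma fsgn_self {N : ℕ} (a : Fin N) : fsgn a a = 0 := by simp [fsgn]

lemma fsgn_of_lt {N : ℕ} {a b : Fin N} (h : a < b) : fsgn a b = -1 := by
  have h' : ((a : ℕ) : ℤ) < ((b : ℕ) : ℤ) := by exact_mod_cast h
  have : (((a : ℕ) : ℤ) - ((b : ℕ) : ℤ)).sign = -1 :=
    Int.sign_eq_neg_one_iff_neg.mpr (by omega)
  rw [fsgn, this]; norm_num

lemma fsgn_of_gt {N : ℕ} {a b : Fin N} (h : b < a) : fsgn a b = 1 := by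
  have h' : ((b : ℕ) : ℤ) < ((a : ℕ) : ℤ) := by exact_mod_cast h
  have : (((a : ℕ) : ℤ) - ((b : ℕ) : ℤ)).sign = 1 :=
    Int.sign_eq_one_iff_pos.mpr (by omega)
  rw [fsgn, this]; norm_num

lemma term1 {N : ℕ} (A : Matrix (Fin N) (Fin N) ℂ) (i j k l : Fin N) :
    (((1 : Matrix (Fin N) (Fin N) ℂ) ⊗ₖ A) * (A ⊗ₖ (1 : Matrix (Fin N) (Fin N) ℂ)) * rmat N)
      (i,k) (j,l)
      = (if j = l then 1 else 0) * (A k j * A i j)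
        + 2 * (if j < l then 1 else 0) * (A k j * A i l) := by
  simp only [mul_apply, Fintype.sum_prod_type, kroneckerMap_apply, rmat, one_apply, ite_and,
    mul_ite, ite_mul, mul_zero, zero_mul, mul_one, one_mul, mul_add, add_mul,
    Finset.sum_add_distrib, Finset.sum_ite_eq, Finset.sum_ite_irrel, Finset.sum_const_zero,
    Finset.sum_ite_eq', Finset.mem_univ, if_true]
  ring_nf

lemma term2 {N : ℕ} (A : Matrix (Fin N) (Fin N) ℂ) (i j k l : Fin N) :
    (rmat N * (A ⊗ₖ (1 : Matrix (Fin N) (Fin N) ℂ)) * ((1 : Matrix (Fin N) (Fin N) ℂ) ⊗ₖ A))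
      (i,k) (j,l)
      = (if i = k then 1 else 0) * (A i j * A i l)
        + 2 * (if k < i then 1 else 0) * (A k j * A i l) := by
  simp only [mul_apply, Fintype.sum_prod_type, kroneckerMap_apply, rmat, one_apply, ite_and,
    mul_ite, ite_mul, mul_zero, zero_mul, mul_one, one_mul, mul_add, add_mul,
    Finset.sum_add_distrib, Finset.sum_ite_eq, Finset.sum_ite_irrel, Finset.sum_const_zero,
    Finset.sum_ite_eq', Finset.mem_univ, if_true]
  ring_nf

lemma term3 {N : ℕ} (A : Matrix (Fin N) (Fin N) ℂ) (i j k l : Fin N) :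
    (((1 : Matrix (Fin N) (Fin N) ℂ) ⊗ₖ A) * rmatT1 N * (A ⊗ₖ (1 : Matrix (Fin N) (Fin N) ℂ)))
      (i,k) (j,l)
      = (if i = l then 1 else 0) * (A k i * A i j)
        + 2 * (if i < l then 1 else 0) * (A k i * A l j) := by
  simp only [mul_apply, Fintype.sum_prod_type, kroneckerMap_apply, rmat, rmatT1, one_apply,
    ite_and, mul_ite, ite_mul, mul_zero, zero_mul, mul_one, one_mul, mul_add, add_mul,
    Finset.sum_add_distrib, Finset.sum_ite_eq, Finset.sum_ite_irrel, Finset.sum_const_zero,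
    Finset.sum_ite_eq', Finset.mem_univ, if_true]
  rw [Finset.sum_congr rfl (fun x _ => show (if x < l then if i = x then A k x * 2 else 0 else 0)
    = (if i = x then if x < l then A k x * 2 else 0 else 0) by split_ifs <;> simp_all)]
  simp only [Finset.sum_ite_eq, Finset.mem_univ, if_true]
  split_ifs <;> simp_all <;> ring

lemma term4 {N : ℕ} (A : Matrix (Fin N) (Fin N) ℂ) (i j k l : Fin N) :
    ((A ⊗ₖ (1 : Matrix (Fin N) (Fin N) ℂ)) * rmatT1 N * ((1 : Matrix (Fin N) (Fin N) ℂ) ⊗ₖ A))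
      (i,k) (j,l)
      = (if j = k then 1 else 0) * (A i j * A j l)
        + 2 * (if k < j then 1 else 0) * (A i k * A j l) := by
  simp only [mul_apply, Fintype.sum_prod_type, kroneckerMap_apply, rmat, rmatT1, one_apply,
    ite_and, mul_ite, ite_mul, mul_zero, zero_mul, mul_one, one_mul, mul_add, add_mul,
    Finset.sum_add_distrib, Finset.sum_ite_eq, Finset.sum_ite_irrel, Finset.sum_const_zero,
    Finset.sum_ite_eq', Finset.mem_univ, if_true]
  rw [Finset.sum_congr rfl (fun x _ => show (if x < j then if k = x then A i x * 2 else 0 else 0)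
    = (if k = x then if x < j then A i x * 2 else 0 else 0) by split_ifs <;> simp_all)]
  simp only [Finset.sum_ite_eq, Finset.mem_univ, if_true]
  split_ifs <;> simp_all <;> ring

lemma if_deltas {N : ℕ} {a b : Fin N} (x y : ℂ) (h : a = b → x = y) :
    (if a = b then (1:ℂ) else 0) * x = (if a = b then (1:ℂ) else 0) * y := by
  split_ifs with hh
  · rw [h hh]
  · ring

lemma sum_lt {N : ℕ} (a b : Fin N) :
    (if a = b then (1:ℂ) else 0) + 2 * (if a < b then (1:ℂ) else 0) = 1 - fsgn a b := by
  rcases lt_trichotomy a b with h | h | h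
  · simp [h, h.ne, fsgn_of_lt h]; ring
  · simp [h, fsgn_self]
  · simp [h.ne', not_lt_of_gt h, fsgn_of_gt h]

lemma sum_gt {N : ℕ} (a b : Fin N) :
    (if a = b then (1:ℂ) else 0) + 2 * (if b < a then (1:ℂ) else 0) = 1 + fsgn a b := by
  rcases lt_trichotomy a b with h | h | h
  · simp [h.ne, not_lt_of_gt h, fsgn_of_lt h]
  · simp [h, fsgn_self]
  · simp [h.ne', h, fsgn_of_gt h]; ring

/-- the Poisson bracket admits the `r`-matrix form
`π_{(i,j),(k,l)}(A) = −(A₂A₁r − rA₁A₂ + A₂r^{T₁}A₁ − A₁r^{T₁}A₂)_{(i,k),(j,l)}`,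
where `A₁ = A ⊗ 𝟙` and `A₂ = 𝟙 ⊗ A`. -/
theorem poisson_r_matrix_form (N : ℕ) (hN : 1 ≤ N)
    (A : Matrix (Fin N) (Fin N) ℂ) (i j k l : Fin N) :
    pb A i j k l
      = -(((1 : Matrix (Fin N) (Fin N) ℂ) ⊗ₖ A) * (A ⊗ₖ (1 : Matrix (Fin N) (Fin N) ℂ)) * rmat N
          - rmat N * (A ⊗ₖ (1 : Matrix (Fin N) (Fin N) ℂ)) * ((1 : Matrix (Fin N) (Fin N) ℂ) ⊗ₖ A)
          + ((1 : Matrix (Fin N) (Fin N) ℂ) ⊗ₖ A) * rmatT1 N * (A ⊗ₖ (1 : Matrix (Fin N) (Fin N) ℂ))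
          - (A ⊗ₖ (1 : Matrix (Fin N) (Fin N) ℂ)) * rmatT1 N * ((1 : Matrix (Fin N) (Fin N) ℂ) ⊗ₖ A))
          (i, k) (j, l) := by
  rw [Matrix.sub_apply, Matrix.add_apply, Matrix.sub_apply, term1, term2, term3, term4, pb]
  have d1 : (if j = l then (1:ℂ) else 0) * (A k j * A i j)
      = (if j = l then (1:ℂ) else 0) * (A k j * A i l) :=
    if_deltas _ _ (fun h => by rw [h])
  have d2 : (if i = k then (1:ℂ) else 0) * (A i j * A i l)
      = (if i = k then (1:ℂ) else 0) * (A k j * A i l) :=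
    if_deltas _ _ (fun h => by rw [h])
  have d3 : (if i = l then (1:ℂ) else 0) * (A k i * A i j)
      = (if i = l then (1:ℂ) else 0) * (A k i * A l j) :=
    if_deltas _ _ (fun h => by rw [h])
  have d4 : (if j = k then (1:ℂ) else 0) * (A i j * A j l)
      = (if j = k then (1:ℂ) else 0) * (A i k * A j l) :=
    if_deltas _ _ (fun h => by rw [h])
  have e1 := sum_lt j l
  have e2 := sum_gt i k
  have e3 := sum_lt i l
  have e4 := sum_gt j k
  linear_combination (A k j * A i l) * (e1 - e2) + (A k i * A l j) * e3
    - (A i k * A j l) * e4 + d1 - d2 + d3 - d4
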